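/- The functions H^{(1,m)}_{3,5} satisfy the q-difference equations: H^{(1,4)}_{3,5}(x) = 1 − q² x³ − q⁴ x⁵ H^{(1,1)}_{3,5}(qx), H^{(1,3)}_{3,5}(x) = 1 − q³ x⁵ − q⁴ x⁶ H^{(1,2)}_{3,5}(qx), H^{(1,2)}_{3,5}(x) = 1 − q² x⁵ − q⁶ x⁹ H^{(1,3)}_{3,5}(qx), and H^{(1,1)}_{3,5}(x) = 1 − q x³ − q⁸ x¹⁰ H^{(1,4)}_{3,5}(qx). -/

import Mathlib

noncomputable section

/-- The product (coefficientwise) topology on formal power series. -/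
instance powerSeriesTopology {R : Type*} [Semiring R] [TopologicalSpace R] :
    TopologicalSpace (PowerSeries R) :=
  TopologicalSpace.induced (fun f (n : ℕ) => (PowerSeries.coeff (R := R) n) f) Pi.topologicalSpace

/-- Formal power series in `x` (outer variable) over formal power series in `q`
(inner variable); i.e. formal power series in `q` and `x`. -/
abbrev Rqx : Type := PowerSeries (PowerSeries ℚ)

/-- The variable `x`. -/
def Xx : Rqx := PowerSeries.X

/-- The variable `q`, viewed as a constant (in `x`) power series. -/
def Qc : Rqx := PowerSeries.C (R := PowerSeries ℚ) PowerSeries.X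

/-- `|5 - 3m| = |nt - ms|` for `(s,t,n) = (3,5,1)`. -/
def dd (m : ℕ) : ℕ := (5 - 3 * (m : ℤ)).natAbs

/-- The period-30 function `χ₃₀^{(1,m)}`: value 1 at `k ≡ ±(5-3m)`, `-1` at
`k ≡ ±(5+3m) (mod 30)`, `0` otherwise. -/
def chi30 (m k : ℕ) : ℤ :=
  if k % 30 = dd m ∨ k % 30 = (30 - dd m) % 30 then 1
  else if k % 30 = (5 + 3 * m) % 30 ∨ k % 30 = (30 - (5 + 3 * m) % 30) % 30 then -1
  else 0

/-- `H^{(1,m)}_{3,5}(x) = ∑_{k≥0} χ₃₀^{(1,m)}(k) q^{(k²-(5-3m)²)/60} x^{(k-|5-3m|)/2}`. -/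
def H35 (m : ℕ) : Rqx :=
  ∑' k : ℕ, (chi30 m k : Rqx) * Qc ^ ((k ^ 2 - dd m ^ 2) / 60) * Xx ^ ((k - dd m) / 2)

lemma psEmbedding {R : Type*} [Semiring R] [TopologicalSpace R] :
    Topology.IsEmbedding (fun (f : PowerSeries R) (n : ℕ) => (PowerSeries.coeff (R := R) n) f) :=
  ⟨⟨rfl⟩, fun _ _ h => PowerSeries.ext fun n => congrFun h n⟩

instance psT2 {R : Type*} [Semiring R] [TopologicalSpace R] [T2Space R] :
    T2Space (PowerSeries R) := psEmbedding.t2Space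

lemma hasSum_coeff {R : Type*} [Semiring R] [TopologicalSpace R]
    {f : ℕ → PowerSeries R} {S : PowerSeries R}
    (h : ∀ n, HasSum (fun k => PowerSeries.coeff (R := R) n (f k)) (PowerSeries.coeff (R := R) n S)) :
    HasSum f S := by
  rw [HasSum, psEmbedding.toIsInducing.tendsto_nhds_iff, tendsto_pi_nhds]
  intro n
  simpa [Function.comp, map_sum, HasSum] using h n

lemma chi30_period (m k : ℕ) : chi30 m k = chi30 m (k % 30) := by
  simp only [chi30, Nat.mod_mod_of_dvd _ (dvd_refl 30)]

lemma chi_shift {m m' : ℕ} (h : ∀ r < 30, chi30 m ((r + 15) % 30) = - chi30 m' r) (k : ℕ) :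
    chi30 m (k + 15) = - chi30 m' k := by
  rw [chi30_period m, chi30_period m',
    show (k + 15) % 30 = (k % 30 + 15) % 30 from by omega]
  exact h _ (Nat.mod_lt _ (by norm_num))

lemma chi_shift41 (k : ℕ) : chi30 4 (k + 15) = - chi30 1 k := chi_shift (by decide) k
lemma chi_shift32 (k : ℕ) : chi30 3 (k + 15) = - chi30 2 k := chi_shift (by decide) k
lemma chi_shift23 (k : ℕ) : chi30 2 (k + 15) = - chi30 3 k := chi_shift (by decide) k
lemma chi_shift14 (k : ℕ) : chi30 1 (k + 15) = - chi30 4 k := chi_shift (by decide) k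

lemma exp_shift (t d d' a : ℕ) (h : (d' + 15) ^ 2 = d ^ 2 + 60 * a) :
    ((2 * t + d' + 15) ^ 2 - d ^ 2) / 60 = a + t + ((2 * t + d') ^ 2 - d' ^ 2) / 60 := by
  have h1 : (2 * t + d' + 15) ^ 2 - d ^ 2 = 4 * (t * (t + d')) + (t + a) * 60 := by
    have h2 : (2 * t + d' + 15) ^ 2 = 4 * (t * (t + d')) + (t + a) * 60 + d ^ 2 := by
      have h3 : (2 * t + d' + 15) ^ 2 = 4 * (t * (t + d')) + t * 60 + (d' + 15) ^ 2 := by ring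
      rw [h3, h]; ring
    rw [h2]; exact Nat.add_sub_cancel _ _
  have h4 : (2 * t + d') ^ 2 - d' ^ 2 = 4 * (t * (t + d')) := by
    have h5 : (2 * t + d') ^ 2 = 4 * (t * (t + d')) + d' ^ 2 := by ring
    rw [h5]; exact Nat.add_sub_cancel _ _
  rw [h1, h4, Nat.add_mul_div_right _ _ (by norm_num : (0:ℕ) < 60)]
  ring

lemma coeff_QX (a b n : ℕ) : (PowerSeries.coeff n) (Qc ^ a * Xx ^ b)
    = if n = b then (PowerSeries.X : PowerSeries ℚ) ^ a else 0 := by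
  rw [show (Qc ^ a) = PowerSeries.C (R := PowerSeries ℚ) ((PowerSeries.X : PowerSeries ℚ) ^ a) from
      (map_pow _ _ _).symm, Xx, PowerSeries.coeff_C_mul, PowerSeries.coeff_X_pow]
  split_ifs <;> simp

lemma coeff_term (a b n : ℕ) (f : Rqx) :
    (PowerSeries.coeff n) (Qc ^ a * Xx ^ b * PowerSeries.rescale PowerSeries.X f)
      = if b ≤ n then
          (PowerSeries.X : PowerSeries ℚ) ^ a
            * ((PowerSeries.X : PowerSeries ℚ) ^ (n - b) * (PowerSeries.coeff (n - b)) f)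
        else 0 := by
  rw [show Qc ^ a * Xx ^ b * PowerSeries.rescale PowerSeries.X f
      = (Qc ^ a * PowerSeries.rescale PowerSeries.X f) * Xx ^ b from by ring, Xx,
    PowerSeries.coeff_mul_X_pow']
  split_ifs with h
  · rw [show (Qc ^ a) = PowerSeries.C (R := PowerSeries ℚ) ((PowerSeries.X : PowerSeries ℚ) ^ a) from
        (map_pow _ _ _).symm, PowerSeries.coeff_C_mul, PowerSeries.coeff_rescale]
  · rfl

lemma coeff_H35 (m : ℕ)
    (hsupp : ∀ k, chi30 m k ≠ 0 → k % 2 = dd m % 2 ∧ dd m ≤ k) (n : ℕ) :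
    (PowerSeries.coeff n) (H35 m)
      = ((chi30 m (2 * n + dd m) : ℤ) : PowerSeries ℚ)
        * (PowerSeries.X : PowerSeries ℚ) ^ (((2 * n + dd m) ^ 2 - dd m ^ 2) / 60) := by
  have hcoeff : ∀ (k j : ℕ), (PowerSeries.coeff j)
      ((chi30 m k : Rqx) * Qc ^ ((k ^ 2 - dd m ^ 2) / 60) * Xx ^ ((k - dd m) / 2))
      = if j = (k - dd m) / 2 then
          ((chi30 m k : ℤ) : PowerSeries ℚ)
            * (PowerSeries.X : PowerSeries ℚ) ^ ((k ^ 2 - dd m ^ 2) / 60)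
        else 0 := by
    intro k j
    rw [show ((chi30 m k : ℤ) : Rqx)
        = PowerSeries.C (R := PowerSeries ℚ) ((chi30 m k : ℤ) : PowerSeries ℚ) from
        (map_intCast _ _).symm,
      show (Qc ^ ((k ^ 2 - dd m ^ 2) / 60))
        = PowerSeries.C (R := PowerSeries ℚ)
            ((PowerSeries.X : PowerSeries ℚ) ^ ((k ^ 2 - dd m ^ 2) / 60)) from
        (map_pow _ _ _).symm,
      ← map_mul, Xx, PowerSeries.coeff_C_mul, PowerSeries.coeff_X_pow]
    split_ifs with h1
    · simp
    · simp
  have hsum : HasSum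
      (fun k : ℕ => (chi30 m k : Rqx) * Qc ^ ((k ^ 2 - dd m ^ 2) / 60) * Xx ^ ((k - dd m) / 2))
      (PowerSeries.mk fun j => ((chi30 m (2 * j + dd m) : ℤ) : PowerSeries ℚ)
        * (PowerSeries.X : PowerSeries ℚ) ^ (((2 * j + dd m) ^ 2 - dd m ^ 2) / 60)) := by
    apply hasSum_coeff
    intro j
    have h1 : ∀ (k : ℕ), k ≠ 2 * j + dd m → (PowerSeries.coeff j)
        ((chi30 m k : Rqx) * Qc ^ ((k ^ 2 - dd m ^ 2) / 60) * Xx ^ ((k - dd m) / 2)) = 0 := by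
      intro k hk
      rw [hcoeff]
      split_ifs with h
      · by_cases hc : chi30 m k = 0
        · simp [hc]
        · obtain ⟨hpar, hle⟩ := hsupp k hc
          exact absurd (by omega : k = 2 * j + dd m) hk
      · rfl
    have h2 := hasSum_single (f := fun k : ℕ => (PowerSeries.coeff j)
        ((chi30 m k : Rqx) * Qc ^ ((k ^ 2 - dd m ^ 2) / 60) * Xx ^ ((k - dd m) / 2)))
      (2 * j + dd m) h1
    have h3 : (PowerSeries.coeff j)
        ((chi30 m (2 * j + dd m) : Rqx)
          * Qc ^ (((2 * j + dd m) ^ 2 - dd m ^ 2) / 60)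
          * Xx ^ ((2 * j + dd m - dd m) / 2))
        = (PowerSeries.coeff j)
            (PowerSeries.mk fun i => ((chi30 m (2 * i + dd m) : ℤ) : PowerSeries ℚ)
              * (PowerSeries.X : PowerSeries ℚ) ^ (((2 * i + dd m) ^ 2 - dd m ^ 2) / 60)) := by
      rw [hcoeff, PowerSeries.coeff_mk, if_pos (by omega : j = (2 * j + dd m - dd m) / 2)]
    rw [← h3]
    exact h2
  rw [H35, hsum.tsum_eq, PowerSeries.coeff_mk]

lemma hsupp1 : ∀ k, chi30 1 k ≠ 0 → k % 2 = dd 1 % 2 ∧ dd 1 ≤ k := by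
  intro k h
  have hd : dd 1 = 2 := by decide
  rw [chi30, hd] at h
  rw [hd]
  split_ifs at h with h1 h2
  · norm_num at h1; omega
  · norm_num at h2; omega
  · simp at h

lemma hsupp2 : ∀ k, chi30 2 k ≠ 0 → k % 2 = dd 2 % 2 ∧ dd 2 ≤ k := by
  intro k h
  have hd : dd 2 = 1 := by decide
  rw [chi30, hd] at h
  rw [hd]
  split_ifs at h with h1 h2
  · norm_num at h1; omega
  · norm_num at h2; omega
  · simp at h

lemma hsupp3 : ∀ k, chi30 3 k ≠ 0 → k % 2 = dd 3 % 2 ∧ dd 3 ≤ k := by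
  intro k h
  have hd : dd 3 = 4 := by decide
  rw [chi30, hd] at h
  rw [hd]
  split_ifs at h with h1 h2
  · norm_num at h1; omega
  · norm_num at h2; omega
  · simp at h

lemma hsupp4 : ∀ k, chi30 4 k ≠ 0 → k % 2 = dd 4 % 2 ∧ dd 4 ≤ k := by
  intro k h
  have hd : dd 4 = 7 := by decide
  rw [chi30, hd] at h
  rw [hd]
  split_ifs at h with h1 h2
  · norm_num at h1; omega
  · norm_num at h2; omega
  · simp at h

/-- The $q$-difference equations for `H^{(1,m)}_{3,5}`:
`H^{(1,4)}(x) = 1 - q²x³ - q⁴x⁵ H^{(1,1)}(qx)`,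
`H^{(1,3)}(x) = 1 - q³x⁵ - q⁴x⁶ H^{(1,2)}(qx)`,
`H^{(1,2)}(x) = 1 - q²x⁵ - q⁶x⁹ H^{(1,3)}(qx)`,
`H^{(1,1)}(x) = 1 - qx³ - q⁸x¹⁰ H^{(1,4)}(qx)`,
where substituting `qx` for `x` is `PowerSeries.rescale q`. -/
theorem H35_q_difference :
    H35 4 = 1 - Qc ^ 2 * Xx ^ 3 -
        Qc ^ 4 * Xx ^ 5 * PowerSeries.rescale (PowerSeries.X : PowerSeries ℚ) (H35 1) ∧
      H35 3 = 1 - Qc ^ 3 * Xx ^ 5 -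
        Qc ^ 4 * Xx ^ 6 * PowerSeries.rescale (PowerSeries.X : PowerSeries ℚ) (H35 2) ∧
      H35 2 = 1 - Qc ^ 2 * Xx ^ 5 -
        Qc ^ 6 * Xx ^ 9 * PowerSeries.rescale (PowerSeries.X : PowerSeries ℚ) (H35 3) ∧
      H35 1 = 1 - Qc * Xx ^ 3 -
        Qc ^ 8 * Xx ^ 10 * PowerSeries.rescale (PowerSeries.X : PowerSeries ℚ) (H35 4) := by
  have c1 := coeff_H35 1 hsupp1
  have c2 := coeff_H35 2 hsupp2
  have c3 := coeff_H35 3 hsupp3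
  have c4 := coeff_H35 4 hsupp4
  rw [show dd 1 = 2 from by decide] at c1
  rw [show dd 2 = 1 from by decide] at c2
  rw [show dd 3 = 4 from by decide] at c3
  rw [show dd 4 = 7 from by decide] at c4
  refine ⟨?_, ?_, ?_, ?_⟩
  · refine PowerSeries.ext fun n => ?_
    rw [map_sub, map_sub, c4 n, PowerSeries.coeff_one, coeff_QX 2 3 n, coeff_term 4 5 n, c1 (n - 5)]
    rcases lt_or_ge n 5 with h5 | h5
    · rw [if_neg (by omega : ¬ 5 ≤ n)]
      interval_cases n <;>
        norm_num [show chi30 4 7 = 1 from by decide, show chi30 4 9 = 0 from by decide,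
          show chi30 4 11 = 0 from by decide, show chi30 4 13 = -1 from by decide,
          show chi30 4 15 = 0 from by decide]
    · rw [if_pos h5, if_neg (by omega : ¬ n = 0), if_neg (by omega : ¬ n = 3),
        show 2 * n + 7 = 2 * (n - 5) + 2 + 15 from by omega, chi_shift41,
        exp_shift (n - 5) 7 2 4 (by norm_num)]
      push_cast
      ring
  · refine PowerSeries.ext fun n => ?_
    rw [map_sub, map_sub, c3 n, PowerSeries.coeff_one, coeff_QX 3 5 n, coeff_term 4 6 n, c2 (n - 6)]
    rcases lt_or_ge n 6 with h6 | h6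
    · rw [if_neg (by omega : ¬ 6 ≤ n)]
      interval_cases n <;>
        norm_num [show chi30 3 4 = 1 from by decide, show chi30 3 6 = 0 from by decide,
          show chi30 3 8 = 0 from by decide, show chi30 3 10 = 0 from by decide,
          show chi30 3 12 = 0 from by decide, show chi30 3 14 = -1 from by decide]
    · rw [if_pos h6, if_neg (by omega : ¬ n = 0), if_neg (by omega : ¬ n = 5),
        show 2 * n + 4 = 2 * (n - 6) + 1 + 15 from by omega, chi_shift32,
        exp_shift (n - 6) 4 1 4 (by norm_num)]
      push_cast
      ring
  · refine PowerSeries.ext fun n => ?_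
    rw [map_sub, map_sub, c2 n, PowerSeries.coeff_one, coeff_QX 2 5 n, coeff_term 6 9 n, c3 (n - 9)]
    rcases lt_or_ge n 9 with h9 | h9
    · rw [if_neg (by omega : ¬ 9 ≤ n)]
      interval_cases n <;>
        norm_num [show chi30 2 1 = 1 from by decide, show chi30 2 3 = 0 from by decide,
          show chi30 2 5 = 0 from by decide, show chi30 2 7 = 0 from by decide,
          show chi30 2 9 = 0 from by decide, show chi30 2 11 = -1 from by decide,
          show chi30 2 13 = 0 from by decide, show chi30 2 15 = 0 from by decide,
          show chi30 2 17 = 0 from by decide]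
    · rw [if_pos h9, if_neg (by omega : ¬ n = 0), if_neg (by omega : ¬ n = 5),
        show 2 * n + 1 = 2 * (n - 9) + 4 + 15 from by omega, chi_shift23,
        exp_shift (n - 9) 1 4 6 (by norm_num)]
      push_cast
      ring
  · refine PowerSeries.ext fun n => ?_
    rw [map_sub, map_sub, c1 n, PowerSeries.coeff_one,
      show Qc * Xx ^ 3 = Qc ^ 1 * Xx ^ 3 from by ring, coeff_QX 1 3 n, coeff_term 8 10 n,
      c4 (n - 10)]
    rcases lt_or_ge n 10 with h10 | h10
    · rw [if_neg (by omega : ¬ 10 ≤ n)]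
      interval_cases n <;>
        norm_num [show chi30 1 2 = 1 from by decide, show chi30 1 4 = 0 from by decide,
          show chi30 1 6 = 0 from by decide, show chi30 1 8 = -1 from by decide,
          show chi30 1 10 = 0 from by decide, show chi30 1 12 = 0 from by decide,
          show chi30 1 14 = 0 from by decide, show chi30 1 16 = 0 from by decide,
          show chi30 1 18 = 0 from by decide, show chi30 1 20 = 0 from by decide]
    · rw [if_pos h10, if_neg (by omega : ¬ n = 0), if_neg (by omega : ¬ n = 3),
        show 2 * n + 2 = 2 * (n - 10) + 7 + 15 from by omega, chi_shift14,
        exp_shift (n - 10) 2 7 8 (by norm_num)]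
      push_cast
      ring
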